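/- Let L ⊆ ℤ^n be a sublattice. The lattice ideal I_L = ⟨x^{u_+} - x^{u_-} : u ∈ L⟩ in ℂ[x_1,...,x_n] is prime if and only if L is saturated, i.e., L = (ℚL) ∩ ℤ^n. -/

import Mathlib

open MvPolynomial
noncomputable def posPart {n : ℕ} (u : Fin n → ℤ) : Fin n →₀ ℕ :=
  Finsupp.equivFunOnFinite.symm fun i => (u i).toNat
namespace LIA
variable {n : ℕ} (L : Submodule ℤ (Fin n → ℤ))
@[simp] lemma posPart_apply (u : Fin n → ℤ) (i : Fin n) :
    _root_.posPart u i = (u i).toNat := rfl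
noncomputable def natHom (n : ℕ) : (Fin n →₀ ℕ) →+ (Fin n → ℤ) where
  toFun d := fun i => (d i : ℤ)
  map_zero' := by ext i; simp
  map_add' a b := by ext i; simp [Finsupp.add_apply]
@[simp] lemma natHom_apply (d : Fin n →₀ ℕ) (i : Fin n) : natHom n d i = (d i : ℤ) := rfl
noncomputable def qHom : (Fin n →₀ ℕ) →+ (Fin n → ℤ) ⧸ L :=
  (L.mkQ.toAddMonoidHom).comp (natHom n)
lemma qHom_apply (d : Fin n →₀ ℕ) : qHom L d = L.mkQ (natHom n d) := rfl
noncomputable def phi : MvPolynomial (Fin n) ℂ →+* AddMonoidAlgebra ℂ ((Fin n → ℤ) ⧸ L) :=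
  AddMonoidAlgebra.mapDomainRingHom ℂ (qHom L)
lemma phi_monomial (d : Fin n →₀ ℕ) (r : ℂ) :
    phi L (monomial d r) = AddMonoidAlgebra.single (qHom L d) r := by
  classical
  show AddMonoidAlgebra.mapDomain (qHom L) (monomial d r) = _
  rw [← single_eq_monomial, AddMonoidAlgebra.mapDomain_single]
lemma qHom_eq_iff (a b : Fin n →₀ ℕ) :
    qHom L a = qHom L b ↔ natHom n a - natHom n b ∈ L := by
  rw [qHom_apply, qHom_apply, Submodule.mkQ_apply, Submodule.mkQ_apply, Submodule.Quotient.eq]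
def S : Set (MvPolynomial (Fin n) ℂ) :=
  {f | ∃ u ∈ L, f = monomial (_root_.posPart u) 1 - monomial (_root_.posPart (-u)) 1}
lemma natHom_posPart_sub (u : Fin n → ℤ) :
    natHom n (_root_.posPart u) - natHom n (_root_.posPart (-u)) = u := by
  funext i
  simp only [Pi.sub_apply, natHom_apply, posPart_apply, Pi.neg_apply]
  omega
lemma span_le_ker : Ideal.span (S L) ≤ RingHom.ker (phi L) := by
  rw [Ideal.span_le]
  rintro f ⟨u, hu, rfl⟩
  have h : qHom L (_root_.posPart u) = qHom L (_root_.posPart (-u)) := by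
    rw [qHom_eq_iff, natHom_posPart_sub]; exact hu
  simp [RingHom.mem_ker, map_sub, phi_monomial, h, SetLike.mem_coe]
open scoped Classical in
lemma phi_apply (f : MvPolynomial (Fin n) ℂ) (x : (Fin n → ℤ) ⧸ L) :
    (phi L f).coeff x = ∑ d ∈ f.support, if qHom L d = x then coeff d f else 0 := by
  classical
  show Finsupp.mapDomain (qHom L) (AddMonoidAlgebra.coeff f) x = _
  rw [Finsupp.mapDomain, Finsupp.sum_apply, Finsupp.sum]
  refine Finset.sum_congr rfl fun d _ => ?_
  rw [Finsupp.single_apply]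
  rfl


lemma binomial_mem (a b : Fin n →₀ ℕ) (hab : natHom n a - natHom n b ∈ L) :
    monomial a (1:ℂ) - monomial b 1 ∈ Ideal.span (S L) := by
  classical
  set u : Fin n → ℤ := natHom n a - natHom n b with hu
  have hw : ∀ i, _root_.posPart u i ≤ a i ∧ _root_.posPart (-u) i ≤ b i := by
    intro i
    simp only [posPart_apply, hu, Pi.sub_apply, Pi.neg_apply, natHom_apply]
    omega
  set w : Fin n →₀ ℕ := Finsupp.equivFunOnFinite.symm fun i => min (a i) (b i) with hwdef
  have hwa : _root_.posPart u + w = a := by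
    ext i
    have : w i = min (a i) (b i) := rfl
    simp only [Finsupp.add_apply, this, posPart_apply, hu, Pi.sub_apply, Pi.neg_apply,
      natHom_apply]
    omega
  have hwb : _root_.posPart (-u) + w = b := by
    ext i
    have : w i = min (a i) (b i) := rfl
    simp only [Finsupp.add_apply, this, posPart_apply, hu, Pi.sub_apply, Pi.neg_apply,
      natHom_apply]
    omega
  have key : monomial a (1:ℂ) - monomial b 1 =
      (monomial (_root_.posPart u) 1 - monomial (_root_.posPart (-u)) 1) * monomial w 1 := by
    rw [sub_mul, monomial_mul, monomial_mul, one_mul, hwa, hwb]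
  rw [key]
  exact Ideal.mul_mem_right _ _ (Ideal.subset_span ⟨u, hab, rfl⟩)

lemma ker_le_span : ∀ (m : ℕ) (f : MvPolynomial (Fin n) ℂ), f.support.card ≤ m →
    phi L f = 0 → f ∈ Ideal.span (S L) := by
  classical
  intro m
  induction m with
  | zero =>
    intro f hf _
    have : f.support = ∅ := Finset.card_eq_zero.mp (Nat.le_zero.mp hf)
    rw [support_eq_empty.mp this]
    exact zero_mem _
  | succ m ih =>
    intro f hf hker
    by_cases h0 : f = 0
    · rw [h0]; exact zero_mem _
    obtain ⟨a, ha⟩ := (support_nonempty.mpr h0)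
    have ha' := mem_support_iff.mp ha
    -- find b ≠ a in the support with the same class
    have hb : ∃ b ∈ f.support, qHom L b = qHom L a ∧ b ≠ a := by
      by_contra hcon
      push_neg at hcon
      have : (phi L f).coeff (qHom L a) = coeff a f := by
        rw [phi_apply]
        rw [Finset.sum_eq_single_of_mem a ha]
        · rw [if_pos rfl]
        · intro d hd hda
          rw [if_neg fun h => hda (hcon d hd h)]
      rw [hker] at this
      exact ha' (by simpa using this.symm)
    obtain ⟨b, hbs, hbq, hba⟩ := hb
    set c := coeff a f with hc
    set g : MvPolynomial (Fin n) ℂ := monomial a c - monomial b c with hg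
    have hgspan : g ∈ Ideal.span (S L) := by
      have h1 : monomial a (1:ℂ) - monomial b 1 ∈ Ideal.span (S L) := by
        apply binomial_mem
        rw [← qHom_eq_iff]; exact hbq.symm
      have : g = C c * (monomial a (1:ℂ) - monomial b 1) := by
        rw [mul_sub, C_mul_monomial, C_mul_monomial, mul_one]
      rw [this]
      exact Ideal.mul_mem_left _ _ h1
    set f' := f - g with hf'
    have hsupp : f'.support ⊆ f.support.erase a := by
      intro d hd
      rw [mem_support_iff] at hd
      rw [Finset.mem_erase]
      by_cases hda : d = a
      · exfalso
        apply hd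
        rw [hda, hf', coeff_sub, hg, coeff_sub, coeff_monomial, coeff_monomial,
          if_pos rfl, if_neg (fun h => hba h), hc]
        ring
      refine ⟨hda, ?_⟩
      by_cases hdb : d = b
      · rw [hdb]; exact hbs
      rw [mem_support_iff]
      intro hdf
      apply hd
      rw [hf', coeff_sub, hg, coeff_sub, coeff_monomial, coeff_monomial,
        if_neg (fun h => hda h.symm), if_neg (fun h => hdb h.symm), hdf]
      ring
    have hcard : f'.support.card ≤ m := by
      have := Finset.card_le_card hsupp
      have h2 : (f.support.erase a).card < f.support.card := Finset.card_erase_lt_of_mem ha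
      omega
    have hker' : phi L f' = 0 := by
      rw [hf', map_sub, hker, hg, map_sub, phi_monomial, phi_monomial, hbq]
      ring
    have := ih f' hcard hker'
    have : f = f' + g := by rw [hf']; ring
    rw [this]
    exact add_mem (ih f' hcard hker') hgspan

lemma span_eq_ker : Ideal.span (S L) = RingHom.ker (phi L) := by
  refine le_antisymm (span_le_ker L) ?_
  intro f hf
  exact ker_le_span L f.support.card f le_rfl hf
lemma posPart_nsmul (c : ℕ) (u : Fin n → ℤ) :
    _root_.posPart ((c : ℤ) • u) = c • _root_.posPart u := by
  ext i
  simp only [Finsupp.smul_apply, posPart_apply, Pi.smul_apply, smul_eq_mul]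
  rcases le_or_gt 0 (u i) with h | h
  · obtain ⟨m, hm⟩ := Int.eq_ofNat_of_zero_le h
    rw [hm]
    have : (c:ℤ) * (m:ℤ) = ((c*m : ℕ) : ℤ) := by push_cast; ring
    rw [this, Int.toNat_natCast, Int.toNat_natCast]
  · have h1 : (c:ℤ) * u i ≤ 0 := mul_nonpos_of_nonneg_of_nonpos (by positivity) h.le
    rw [Int.toNat_of_nonpos h1, Int.toNat_of_nonpos h.le, mul_zero]

lemma prime_of_saturated
    (hsat : ∀ (u : Fin n → ℤ) (c : ℤ), c ≠ 0 → c • u ∈ L → u ∈ L) :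
    (Ideal.span (S L)).IsPrime := by
  haveI : NoZeroSMulDivisors ℤ ((Fin n → ℤ) ⧸ L) := by
    constructor
    intro c x hcx
    by_cases hc : c = 0
    · exact Or.inl hc
    right
    obtain ⟨y, rfl⟩ := L.mkQ_surjective x
    rw [← map_smul, Submodule.mkQ_apply, Submodule.Quotient.mk_eq_zero] at hcx
    rw [Submodule.mkQ_apply, Submodule.Quotient.mk_eq_zero]
    exact hsat y c hc hcx
  haveI : Module.Finite ℤ ((Fin n → ℤ) ⧸ L) := Module.Finite.quotient ℤ L
  haveI : Module.Free ℤ ((Fin n → ℤ) ⧸ L) := Module.free_of_finite_type_torsion_free'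
  haveI : UniqueSums ((Fin n → ℤ) ⧸ L) := by
    have b := Module.Free.chooseBasis ℤ ((Fin n → ℤ) ⧸ L)
    exact (AddEquiv.uniqueSums_iff b.repr.toAddEquiv).mpr inferInstance
  haveI : IsDomain (AddMonoidAlgebra ℂ ((Fin n → ℤ) ⧸ L)) := NoZeroDivisors.to_isDomain _
  rw [span_eq_ker]
  exact RingHom.ker_isPrime (phi L)

lemma saturated_of_prime (hP : (Ideal.span (S L)).IsPrime) :
    ∀ (u : Fin n → ℤ) (c : ℤ), c ≠ 0 → c • u ∈ L → u ∈ L := by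
  intro u c hc hcu
  by_contra hu
  set c' := c.natAbs with hc'def
  have hc'u : (c' : ℤ) • u ∈ L := by
    rcases Int.natAbs_eq c with h | h
    · rwa [← h]
    · have h2 : ((c' : ℤ)) • u = -(c • u) := by rw [h, neg_smul, neg_neg]
      rw [h2]; exact neg_mem hcu
  have hc0 : c' ≠ 0 := Int.natAbs_ne_zero.mpr hc
  have hc1 : c' ≠ 1 := by
    intro h
    apply hu
    simpa [h] using hc'u
  have hp : (monomial (_root_.posPart u) (1:ℂ)) ^ c'
      = monomial (_root_.posPart ((c':ℤ) • u)) 1 := by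
    rw [monomial_pow, one_pow, posPart_nsmul]
  have hq : (monomial (_root_.posPart (-u)) (1:ℂ)) ^ c'
      = monomial (_root_.posPart (-((c':ℤ) • u))) 1 := by
    rw [monomial_pow, one_pow, ← smul_neg, posPart_nsmul]
  have hmem : (monomial (_root_.posPart u) (1:ℂ)) ^ c'
      - (monomial (_root_.posPart (-u)) (1:ℂ)) ^ c' ∈ Ideal.span (S L) := by
    rw [hp, hq]
    exact Ideal.subset_span ⟨(c':ℤ) • u, hc'u, rfl⟩
  have hfac := geom_sum₂_mul (monomial (_root_.posPart u) (1:ℂ))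
    (monomial (_root_.posPart (-u)) (1:ℂ)) c'
  rcases hP.mem_or_mem (hfac ▸ hmem) with hin | hin
  · have hle : Ideal.span (S L) ≤ RingHom.ker (eval (fun _ : Fin n => (1:ℂ))) := by
      rw [Ideal.span_le]
      rintro g ⟨v, hv, rfl⟩
      simp [RingHom.mem_ker, eval_monomial, Finsupp.prod]
    have h0 := hle hin
    rw [RingHom.mem_ker, map_sum] at h0
    simp only [map_mul, map_pow, eval_monomial, Finsupp.prod, one_pow, one_mul,
      Finset.prod_const_one, mul_one] at h0
    rw [Finset.sum_const, Finset.card_range, nsmul_eq_mul, mul_one] at h0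
    exact hc0 (by exact_mod_cast h0)
  · have h0 : phi L (monomial (_root_.posPart u) (1:ℂ)
        - monomial (_root_.posPart (-u)) 1) = 0 := span_le_ker L hin
    rw [map_sub, phi_monomial, phi_monomial] at h0
    have hne : qHom L (_root_.posPart u) ≠ qHom L (_root_.posPart (-u)) := by
      rw [Ne, qHom_eq_iff, natHom_posPart_sub]
      exact hu
    have hgg := sub_eq_zero.mp h0
    rcases AddMonoidAlgebra.single_inj.mp hgg with ⟨h, _⟩ | ⟨h, _⟩
    · exact hne h
    · exact one_ne_zero h
end LIA

/-- The lattice ideal `I_L = ⟨x^{u₊} - x^{u₋} : u ∈ L⟩` of a sublattice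
`L ⊆ ℤ^n` is prime if and only if `L` is saturated, i.e. `L = (ℚL) ∩ ℤ^n`. -/
theorem lattice_ideal_prime_iff_saturated {n : ℕ}
    (L : Submodule ℤ (Fin n → ℤ)) :
    (Ideal.span {f : MvPolynomial (Fin n) ℂ | ∃ u ∈ L,
        f = monomial (posPart u) 1 - monomial (posPart (-u)) 1}).IsPrime ↔
    (∀ (u : Fin n → ℤ) (c : ℤ), c ≠ 0 → c • u ∈ L → u ∈ L) := by
  exact ⟨LIA.saturated_of_prime L, LIA.prime_of_saturated L⟩
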